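/- For real numbers p < u < v < q define D(p, q; u, v) = (1/2)·log( ((v − p)·(q − u)) / ((u − p)·(q − v)) ) (the Hilbert distance between u and v in the interval (p, q)). Then for all real numbers a < a' < x < y < z < b one has D(a, b; x, y) / D(a, b; x, z) ≤ D(a', b; x, y) / D(a', b; x, z); equivalently, since all four quantities are positive, D(a, b; x, y)·D(a', b; x, z) ≤ D(a', b; x, y)·D(a, b; x, z). (The lemma proved in the Appendix.) -/

import Mathlib

open Real

/-- Derivative of the "half log odds" function `t ↦ (1/2)(log(t−a) − log(b−t))`. -/
private lemma fD_hasDerivAt (a b t : ℝ) (h1 : a < t) (h2 : t < b) :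
    HasDerivAt (fun s => (1/2) * (Real.log (s - a) - Real.log (b - s)))
      ((1/2) * (1/(t-a) + 1/(b-t))) t := by
  have ha : t - a ≠ 0 := by nlinarith
  have hb : b - t ≠ 0 := by nlinarith
  have d1 : HasDerivAt (fun s : ℝ => Real.log (s - a)) (1/(t-a)) t := by
    simpa using (((hasDerivAt_id t).sub_const a).log ha)
  have d2 : HasDerivAt (fun s : ℝ => Real.log (b - s)) (-(1/(b-t))) t := by
    have : HasDerivAt (fun s : ℝ => b - s) (-1) t := (hasDerivAt_id t).const_sub b
    simpa [neg_div] using this.log hb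
  have := (d1.sub d2).const_mul (1/2 : ℝ)
  exact this.congr_deriv (by ring)

private lemma log_expand (a x y b : ℝ) (h1 : a < x) (h2 : x < y) (h3 : y < b) :
    (1/2) * Real.log (((y - a) * (b - x)) / ((x - a) * (b - y))) =
      ((1/2) * (Real.log (y - a) - Real.log (b - y))) -
        ((1/2) * (Real.log (x - a) - Real.log (b - x))) := by
  have p1 : (0:ℝ) < y - a := by linarith
  have p2 : (0:ℝ) < b - x := by linarith
  have p3 : (0:ℝ) < x - a := by linarith
  have p4 : (0:ℝ) < b - y := by linarith
  rw [Real.log_div (by positivity) (by positivity),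
    Real.log_mul p1.ne' p2.ne', Real.log_mul p3.ne' p4.ne']
  ring

set_option maxHeartbeats 2000000 in
open Real in
theorem appendix_lemma (a a' x y z b : ℝ)
    (h1 : a < a') (h2 : a' < x) (h3 : x < y) (h4 : y < z) (h5 : z < b) :
    ((1 / 2) * Real.log (((y - a) * (b - x)) / ((x - a) * (b - y)))) *
      ((1 / 2) * Real.log (((z - a') * (b - x)) / ((x - a') * (b - z)))) ≤
    ((1 / 2) * Real.log (((y - a') * (b - x)) / ((x - a') * (b - y)))) *
      ((1 / 2) * Real.log (((z - a) * (b - x)) / ((x - a) * (b - z)))) := by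
  set f : ℝ → ℝ := fun s => (1/2) * (Real.log (s - a) - Real.log (b - s)) with hf
  set g : ℝ → ℝ := fun s => (1/2) * (Real.log (s - a') - Real.log (b - s)) with hg
  set r : ℝ := ((b - a') * (y - a)) / ((b - a) * (y - a')) with hr
  -- the four D-values
  have Ey : (1/2) * Real.log (((y - a) * (b - x)) / ((x - a) * (b - y))) = f y - f x :=
    log_expand a x y b (by linarith) h3 (by linarith)
  have Ez : (1/2) * Real.log (((z - a) * (b - x)) / ((x - a) * (b - z))) = f z - f x :=
    log_expand a x z b (by linarith) (by linarith) h5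
  have Ey' : (1/2) * Real.log (((y - a') * (b - x)) / ((x - a') * (b - y))) = g y - g x :=
    log_expand a' x y b h2 h3 (by linarith)
  have Ez' : (1/2) * Real.log (((z - a') * (b - x)) / ((x - a') * (b - z))) = g z - g x :=
    log_expand a' x z b h2 (by linarith) h5
  rw [Ey, Ez, Ey', Ez']
  -- positivity of denominators appearing in r
  have hba : (0:ℝ) < b - a := by linarith
  have hba' : (0:ℝ) < b - a' := by linarith
  have hya : (0:ℝ) < y - a := by linarith
  have hya' : (0:ℝ) < y - a' := by linarith
  have hrpos : 0 < r := by rw [hr]; positivity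
  -- Step 1 : r * (f y - f x) ≤ g y - g x
  have step1 : r * (f y - f x) ≤ g y - g x := by
    have mono : MonotoneOn (fun s => g s - r * f s) (Set.Icc x y) := by
      apply monotoneOn_of_hasDerivWithinAt_nonneg (f' := fun t =>
        (1/2) * (1/(t-a') + 1/(b-t)) - r * ((1/2) * (1/(t-a) + 1/(b-t)))) (convex_Icc x y)
      · intro t ht
        have hta : a < t := by linarith [ht.1]
        have hta' : a' < t := by linarith [ht.1]
        have htb : t < b := by linarith [ht.2]
        exact (((fD_hasDerivAt a' b t hta' htb).sub
          ((fD_hasDerivAt a b t hta htb).const_mul r)).continuousAt.continuousWithinAt)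
      · intro t ht
        rw [interior_Icc] at ht
        have hta : a < t := by linarith [ht.1]
        have hta' : a' < t := by linarith [ht.1]
        have htb : t < b := by linarith [ht.2]
        exact (((fD_hasDerivAt a' b t hta' htb).sub
          ((fD_hasDerivAt a b t hta htb).const_mul r)).hasDerivWithinAt)
      · intro t ht
        rw [interior_Icc] at ht
        have hta : (0:ℝ) < t - a := by linarith [ht.1]
        have hta' : (0:ℝ) < t - a' := by linarith [ht.1]
        have htb : (0:ℝ) < b - t := by linarith [ht.2]
        have key : (1/2) * (1/(t-a') + 1/(b-t)) - r * ((1/2) * (1/(t-a) + 1/(b-t)))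
            = ((1/2) * (b - a') * (a' - a) * (y - t)) /
              ((b - t) * (y - a') * (t - a') * (t - a)) := by
          rw [hr]; field_simp; ring
        rw [key]
        have hyt : (0:ℝ) ≤ y - t := by linarith [ht.2]
        have haa : (0:ℝ) ≤ a' - a := by linarith
        positivity
    have hxy := mono (Set.left_mem_Icc.2 h3.le) (Set.right_mem_Icc.2 h3.le) h3.le
    simp only at hxy
    linarith
  -- positivity of f y - f x
  have hFy : 0 < f y - f x := by
    rw [hf]
    have l1 : Real.log (x - a) < Real.log (y - a) :=
      Real.log_lt_log (by linarith) (by linarith)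
    have l2 : Real.log (b - y) < Real.log (b - x) :=
      Real.log_lt_log (by linarith) (by linarith)
    simp only
    linarith
  -- Step 2 : monotonicity of K on [y, z]
  have step2 : (f y - f x) * (g z - g x) ≤ (g y - g x) * (f z - f x) := by
    have mono : MonotoneOn (fun s => (g y - g x) * (f s - f x) - (f y - f x) * (g s - g x))
        (Set.Icc y z) := by
      apply monotoneOn_of_hasDerivWithinAt_nonneg (f' := fun t =>
        (g y - g x) * ((1/2) * (1/(t-a) + 1/(b-t))) -
          (f y - f x) * ((1/2) * (1/(t-a') + 1/(b-t)))) (convex_Icc y z)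
      · intro t ht
        have hta : a < t := by linarith [ht.1]
        have hta' : a' < t := by linarith [ht.1]
        have htb : t < b := by linarith [ht.2]
        have dd := ((((fD_hasDerivAt a b t hta htb).sub_const (f x)).const_mul (g y - g x)).sub
          (((fD_hasDerivAt a' b t hta' htb).sub_const (g x)).const_mul (f y - f x)))
        exact dd.continuousAt.continuousWithinAt
      · intro t ht
        rw [interior_Icc] at ht
        have hta : a < t := by linarith [ht.1]
        have hta' : a' < t := by linarith [ht.1]
        have htb : t < b := by linarith [ht.2]
        exact ((((fD_hasDerivAt a b t hta htb).sub_const (f x)).const_mul (g y - g x)).sub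
          (((fD_hasDerivAt a' b t hta' htb).sub_const (g x)).const_mul (f y - f x))).hasDerivWithinAt
      · intro t ht
        rw [interior_Icc] at ht
        have hta : (0:ℝ) < t - a := by linarith [ht.1]
        have hta' : (0:ℝ) < t - a' := by linarith [ht.1]
        have htb : (0:ℝ) < b - t := by linarith [ht.2]
        -- r * F'(t) - G'(t) ≥ 0 on t ≥ y
        have key : r * ((1/2) * (1/(t-a) + 1/(b-t))) - (1/2) * (1/(t-a') + 1/(b-t))
            = ((1/2) * (b - a') * (a' - a) * (t - y)) /
              ((b - t) * (y - a') * (t - a') * (t - a)) := by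
          rw [hr]; field_simp; ring
        have hty : (0:ℝ) ≤ t - y := by linarith [ht.1]
        have haa : (0:ℝ) ≤ a' - a := by linarith
        have hGG : (f y - f x) * ((1/2) * (1/(t-a') + 1/(b-t)))
            ≤ (f y - f x) * (r * ((1/2) * (1/(t-a) + 1/(b-t)))) := by
          apply mul_le_mul_of_nonneg_left _ hFy.le
          have : (0:ℝ) ≤ ((1/2) * (b - a') * (a' - a) * (t - y)) /
              ((b - t) * (y - a') * (t - a') * (t - a)) := by positivity
          linarith [key ▸ this]
        have hF'pos : (0:ℝ) ≤ (1/2) * (1/(t-a) + 1/(b-t)) := by positivity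
        have := mul_le_mul_of_nonneg_right step1 hF'pos
        nlinarith [mul_le_mul_of_nonneg_right step1 hF'pos]
    have hyz := mono (Set.left_mem_Icc.2 h4.le) (Set.right_mem_Icc.2 h4.le) h4.le
    simp only at hyz
    nlinarith [hyz]
  linarith [step2]
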